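/- The Poisson transform G̃_k(z) = Σ_{m≥0} μ_{m,k} z^m e^{−z}/m! of the average PATRICIA profile satisfies the functional equation G̃_k(z) = G̃_{k−1}(pz) + G̃_{k−1}(qz) + e^{−pz}(G̃_k − G̃_{k−1})(qz) + e^{−qz}(G̃_k − G̃_{k−1})(pz) for all k ≥ 1 and all z (as formal identity of entire functions / for all real z ≥ 0). -/

import Mathlib

noncomputable def patriciaMu (p : ℝ) : ℕ → ℕ → ℝ
  | 0, _ => 0
  | 1, 0 => 1
  | 1, _ + 1 => 0
  | _ + 2, 0 => 0
  | n + 2, k + 1 =>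
      (∑ j ∈ Finset.Ioo 0 (n + 2),
        ((n + 2).choose j : ℝ) * p ^ j * (1 - p) ^ (n + 2 - j) *
          (patriciaMu p j k + patriciaMu p (n + 2 - j) k)) /
        (1 - p ^ (n + 2) - (1 - p) ^ (n + 2))
  termination_by n k => k


open Finset

lemma patriciaMu_zero (p : ℝ) (k : ℕ) : patriciaMu p 0 k = 0 := by
  cases k <;> simp [patriciaMu]

lemma patriciaMu_one_succ (p : ℝ) (k : ℕ) : patriciaMu p 1 (k + 1) = 0 := by simp [patriciaMu]

lemma patriciaMu_rec_def (p : ℝ) (n k : ℕ) :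
    patriciaMu p (n + 2) (k + 1) =
      (∑ j ∈ Finset.Ioo 0 (n + 2),
        ((n + 2).choose j : ℝ) * p ^ j * (1 - p) ^ (n + 2 - j) *
          (patriciaMu p j k + patriciaMu p (n + 2 - j) k)) /
        (1 - p ^ (n + 2) - (1 - p) ^ (n + 2)) := by
  rw [patriciaMu]

lemma denom_pos {p : ℝ} (hp : 0 < p) (hp1 : p < 1) (n : ℕ) :
    0 < 1 - p ^ (n + 2) - (1 - p) ^ (n + 2) := by
  have hq : 0 < 1 - p := by linarith
  have h1 : p ^ (n + 2) ≤ p ^ 2 := pow_le_pow_of_le_one hp.le hp1.le (by omega)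
  have h2 : (1 - p) ^ (n + 2) ≤ (1 - p) ^ 2 :=
    pow_le_pow_of_le_one hq.le (by linarith) (by omega)
  nlinarith [mul_pos hp hq]

lemma sum_range_eq_Ioo (f : ℕ → ℝ) {N : ℕ} (hN : 0 < N) :
    ∑ m ∈ Finset.range N, f m = f 0 + ∑ m ∈ Finset.Ioo 0 N, f m := by
  rw [Finset.range_eq_Ico, ← Finset.Ioo_insert_left hN, Finset.sum_insert (by simp)]

lemma sum_Ioo_binom (p : ℝ) (N : ℕ) (hN : 2 ≤ N) :
    ∑ j ∈ Finset.Ioo 0 N, (N.choose j : ℝ) * p ^ j * (1 - p) ^ (N - j)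
      = 1 - p ^ N - (1 - p) ^ N := by
  have h := add_pow p (1 - p) N
  rw [show p + (1 - p) = 1 by ring, one_pow] at h
  rw [Finset.sum_range_succ, sum_range_eq_Ioo _ (by omega : 0 < N)] at h
  simp only [pow_zero, Nat.sub_zero, Nat.choose_zero_right, Nat.choose_self, Nat.sub_self,
    Nat.cast_one, one_mul, mul_one] at h
  have : ∑ j ∈ Finset.Ioo 0 N, (N.choose j : ℝ) * p ^ j * (1 - p) ^ (N - j)
      = ∑ j ∈ Finset.Ioo 0 N, p ^ j * (1 - p) ^ (N - j) * (N.choose j : ℝ) := by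
    refine Finset.sum_congr rfl fun j _ => by ring
  rw [this]
  linarith

lemma patriciaMu_nonneg_le {p : ℝ} (hp : 0 < p) (hp1 : p < 1) :
    ∀ k n, 0 ≤ patriciaMu p n k ∧ patriciaMu p n k ≤ n := by
  have hq : 0 ≤ 1 - p := by linarith
  intro k
  induction k with
  | zero =>
    intro n
    match n with
    | 0 => simp [patriciaMu]
    | 1 => norm_num [patriciaMu]
    | n + 2 => simp [patriciaMu]; positivity
  | succ k ih =>
    intro n
    match n with
    | 0 => simp [patriciaMu]
    | 1 => simp [patriciaMu]
    | n + 2 =>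
      rw [patriciaMu_rec_def]
      have hD := denom_pos hp hp1 n
      have hterm : ∀ j ∈ Finset.Ioo 0 (n + 2),
          0 ≤ ((n + 2).choose j : ℝ) * p ^ j * (1 - p) ^ (n + 2 - j) *
            (patriciaMu p j k + patriciaMu p (n + 2 - j) k) := by
        intro j hj
        have h1 := (ih j).1
        have h2 := (ih (n + 2 - j)).1
        have : (0:ℝ) ≤ ((n + 2).choose j : ℝ) * p ^ j * (1 - p) ^ (n + 2 - j) := by positivity
        nlinarith
      constructor
      · exact div_nonneg (Finset.sum_nonneg hterm) hD.le
      · rw [div_le_iff₀ hD]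
        calc ∑ j ∈ Finset.Ioo 0 (n + 2),
              ((n + 2).choose j : ℝ) * p ^ j * (1 - p) ^ (n + 2 - j) *
                (patriciaMu p j k + patriciaMu p (n + 2 - j) k)
            ≤ ∑ j ∈ Finset.Ioo 0 (n + 2),
              ((n + 2).choose j : ℝ) * p ^ j * (1 - p) ^ (n + 2 - j) * (n + 2 : ℝ) := by
              refine Finset.sum_le_sum fun j hj => ?_
              have hjle : j ≤ n + 2 := (Finset.mem_Ioo.1 hj).2.le
              have h1 := (ih j).2
              have h2 := (ih (n + 2 - j)).2
              have hcast : ((j : ℝ)) + ((n + 2 - j : ℕ) : ℝ) = (n + 2 : ℝ) := by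
                have := Nat.add_sub_cancel' hjle
                push_cast [Nat.cast_sub hjle]
                ring
              have hC : (0:ℝ) ≤ ((n + 2).choose j : ℝ) * p ^ j * (1 - p) ^ (n + 2 - j) := by
                positivity
              nlinarith
          _ = (n + 2 : ℝ) * (1 - p ^ (n + 2) - (1 - p) ^ (n + 2)) := by
              rw [← Finset.sum_mul, sum_Ioo_binom p (n + 2) (by omega)]
              ring
          _ = ((n + 2 : ℕ) : ℝ) * (1 - p ^ (n + 2) - (1 - p) ^ (n + 2)) := by
              push_cast; ring

lemma summable_norm_muF {p : ℝ} (hp : 0 < p) (hp1 : p < 1) (k : ℕ) (x : ℝ) :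
    Summable fun m : ℕ => ‖patriciaMu p m k * x ^ m / (m.factorial : ℝ)‖ := by
  refine Summable.of_nonneg_of_le (fun m => norm_nonneg _) (fun m => ?_)
    (Real.summable_pow_div_factorial (2 * |x|))
  · 
    have h1 := (patriciaMu_nonneg_le hp hp1 k m).1
    have h2 := (patriciaMu_nonneg_le hp hp1 k m).2
    have hm : (m : ℝ) ≤ 2 ^ m := by
      exact_mod_cast (Nat.lt_two_pow_self (n := m)).le
    rw [Real.norm_eq_abs, abs_div, abs_mul, abs_pow]
    rw [abs_of_nonneg h1, Nat.abs_cast]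
    rw [mul_pow]
    have key : patriciaMu p m k * |x| ^ m ≤ 2 ^ m * |x| ^ m := by
      calc patriciaMu p m k * |x| ^ m ≤ (m : ℝ) * |x| ^ m :=
            mul_le_mul_of_nonneg_right h2 (by positivity)
        _ ≤ 2 ^ m * |x| ^ m := mul_le_mul_of_nonneg_right hm (by positivity)
    gcongr

lemma summable_muF {p : ℝ} (hp : 0 < p) (hp1 : p < 1) (k : ℕ) (x : ℝ) :
    Summable fun m : ℕ => patriciaMu p m k * x ^ m / (m.factorial : ℝ) :=
  (summable_norm_muF hp hp1 k x).of_norm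

lemma summable_norm_expF (y : ℝ) :
    Summable fun m : ℕ => ‖y ^ m / (m.factorial : ℝ)‖ := by
  have := Real.summable_pow_div_factorial |y|
  refine this.congr fun m => ?_
  rw [Real.norm_eq_abs, abs_div, abs_pow, Nat.abs_cast]

noncomputable def muF (p : ℝ) (k : ℕ) (x : ℝ) : ℝ :=
  ∑' m : ℕ, patriciaMu p m k * x ^ m / (m.factorial : ℝ)

lemma exp_eq_tsum' (y : ℝ) : Real.exp y = ∑' m : ℕ, y ^ m / (m.factorial : ℝ) := by
  rw [Real.exp_eq_exp_ℝ, NormedSpace.exp_eq_tsum_div]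

lemma cauchy_coeff (a b z : ℝ) (c : ℕ → ℝ) (n : ℕ) :
    ∑ kl ∈ Finset.HasAntidiagonal.antidiagonal n, ((a * z) ^ kl.1 / (kl.1.factorial : ℝ)) *
        (c kl.2 * (b * z) ^ kl.2 / (kl.2.factorial : ℝ)) =
      (∑ m ∈ Finset.range (n + 1), (n.choose m : ℝ) * a ^ m * b ^ (n - m) * c (n - m)) *
        (z ^ n / (n.factorial : ℝ)) := by
  rw [Finset.Nat.sum_antidiagonal_eq_sum_range_succ_mk, Finset.sum_mul]
  refine Finset.sum_congr rfl fun i hi => ?_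
  have hin : i ≤ n := Nat.lt_succ_iff.mp (Finset.mem_range.mp hi)
  have hfac : ((n.choose i : ℕ) : ℝ) * (i.factorial : ℝ) * ((n - i).factorial : ℝ)
      = (n.factorial : ℝ) := by
    exact_mod_cast congrArg (Nat.cast : ℕ → ℝ) (Nat.choose_mul_factorial_mul_factorial hin)
  have hz : z ^ i * z ^ (n - i) = z ^ n := by
    rw [← pow_add]; congr 1; omega
  have hi0 : (i.factorial : ℝ) ≠ 0 := Nat.cast_ne_zero.mpr i.factorial_ne_zero
  have hni0 : ((n - i).factorial : ℝ) ≠ 0 := Nat.cast_ne_zero.mpr (n - i).factorial_ne_zero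
  have hn0 : (n.factorial : ℝ) ≠ 0 := Nat.cast_ne_zero.mpr n.factorial_ne_zero
  rw [mul_pow, mul_pow]
  field_simp
  linear_combination (a ^ i * b ^ (n - i) * c (n - i) * (n.factorial : ℝ)) * hz +
    (a ^ i * b ^ (n - i) * c (n - i) * z ^ n) * hfac - 2 * ((a ^ i * b ^ (n - i) * c (n - i) * z ^ n) * hfac)

lemma sum_reflect' (f : ℕ → ℝ) (N : ℕ) :
    ∑ j ∈ Finset.range (N + 1), f (N - j) = ∑ j ∈ Finset.range (N + 1), f j := by
  rw [← Finset.sum_range_reflect]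
  refine Finset.sum_congr rfl fun j hj => ?_
  have h : N + 1 - 1 - j = N - j := by omega
  rw [h]
  have hj' := Finset.mem_range.mp hj
  congr 1
  omega

lemma patriciaMu_key {p : ℝ} (hp : 0 < p) (hp1 : p < 1) (k n : ℕ) :
    patriciaMu p n (k + 1) =
      (∑ m ∈ Finset.range (n + 1),
        (n.choose m : ℝ) * (1 - p) ^ m * p ^ (n - m) * patriciaMu p (n - m) k) +
      (∑ m ∈ Finset.range (n + 1),
        (n.choose m : ℝ) * p ^ m * (1 - p) ^ (n - m) * patriciaMu p (n - m) k) +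
      (1 - p) ^ n * (patriciaMu p n (k + 1) - patriciaMu p n k) +
      p ^ n * (patriciaMu p n (k + 1) - patriciaMu p n k) := by
  match n with
  | 0 => simp [patriciaMu_zero]
  | 1 =>
    simp [Finset.sum_range_succ, patriciaMu_zero, patriciaMu_one_succ]
    try ring
  | n + 2 =>
    have hD := denom_pos hp hp1 n
    have hmu : patriciaMu p (n + 2) (k + 1) * (1 - p ^ (n + 2) - (1 - p) ^ (n + 2)) =
        ∑ j ∈ Finset.Ioo 0 (n + 2),
          ((n + 2).choose j : ℝ) * p ^ j * (1 - p) ^ (n + 2 - j) *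
            (patriciaMu p j k + patriciaMu p (n + 2 - j) k) := by
      rw [patriciaMu_rec_def]
      field_simp
    -- reflect the first sum
    have eA : ∑ m ∈ Finset.range (n + 3),
          ((n + 2).choose m : ℝ) * (1 - p) ^ m * p ^ (n + 2 - m) * patriciaMu p (n + 2 - m) k
        = ∑ m ∈ Finset.range (n + 3),
          ((n + 2).choose m : ℝ) * p ^ m * (1 - p) ^ (n + 2 - m) * patriciaMu p m k := by
      rw [← sum_reflect' (fun m => ((n + 2).choose m : ℝ) * p ^ m * (1 - p) ^ (n + 2 - m) *
        patriciaMu p m k) (n + 2)]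
      refine Finset.sum_congr rfl fun m hm => ?_
      have hmle : m ≤ n + 2 := by
        have := Finset.mem_range.mp hm; omega
      rw [Nat.choose_symm hmle, Nat.sub_sub_self hmle]
      ring
    have eT : (∑ m ∈ Finset.range (n + 3),
          ((n + 2).choose m : ℝ) * p ^ m * (1 - p) ^ (n + 2 - m) * patriciaMu p m k) +
        (∑ m ∈ Finset.range (n + 3),
          ((n + 2).choose m : ℝ) * p ^ m * (1 - p) ^ (n + 2 - m) * patriciaMu p (n + 2 - m) k)
        = (1 - p) ^ (n + 2) * patriciaMu p (n + 2) k +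
          (∑ j ∈ Finset.Ioo 0 (n + 2),
            ((n + 2).choose j : ℝ) * p ^ j * (1 - p) ^ (n + 2 - j) *
              (patriciaMu p j k + patriciaMu p (n + 2 - j) k)) +
          p ^ (n + 2) * patriciaMu p (n + 2) k := by
      rw [← Finset.sum_add_distrib]
      have : ∀ m, ((n + 2).choose m : ℝ) * p ^ m * (1 - p) ^ (n + 2 - m) * patriciaMu p m k +
          ((n + 2).choose m : ℝ) * p ^ m * (1 - p) ^ (n + 2 - m) * patriciaMu p (n + 2 - m) k
          = ((n + 2).choose m : ℝ) * p ^ m * (1 - p) ^ (n + 2 - m) *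
            (patriciaMu p m k + patriciaMu p (n + 2 - m) k) := fun m => by ring
      simp_rw [this]
      rw [Finset.sum_range_succ, sum_range_eq_Ioo _ (by omega : 0 < n + 2)]
      simp [patriciaMu_zero]
      try ring
    rw [eA, eT]
    linarith [hmu]

lemma muF_sub (p : ℝ) (hp : 0 < p) (hp1 : p < 1) (k : ℕ) (x : ℝ) :
    muF p (k + 1) x - muF p k x =
      ∑' n : ℕ, (patriciaMu p n (k + 1) - patriciaMu p n k) * x ^ n / (n.factorial : ℝ) := by
  rw [muF, muF, ← Summable.tsum_sub (summable_muF hp hp1 (k + 1) x) (summable_muF hp hp1 k x)]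
  exact tsum_congr fun n => by ring

lemma muF_functional (p : ℝ) (hp : 0 < p) (hp1 : p < 1) (k : ℕ) (z : ℝ) :
    muF p (k + 1) z =
      Real.exp ((1 - p) * z) * muF p k (p * z) + Real.exp (p * z) * muF p k ((1 - p) * z) +
      (muF p (k + 1) ((1 - p) * z) - muF p k ((1 - p) * z)) +
      (muF p (k + 1) (p * z) - muF p k (p * z)) := by
  have h1 : Real.exp ((1 - p) * z) * muF p k (p * z) =
      ∑' n : ℕ, (∑ m ∈ Finset.range (n + 1),
        (n.choose m : ℝ) * (1 - p) ^ m * p ^ (n - m) * patriciaMu p (n - m) k) *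
        (z ^ n / (n.factorial : ℝ)) := by
    rw [exp_eq_tsum', muF, tsum_mul_tsum_eq_tsum_sum_antidiagonal_of_summable_norm
      (summable_norm_expF ((1 - p) * z)) (summable_norm_muF hp hp1 k (p * z))]
    exact tsum_congr fun n => cauchy_coeff (1 - p) p z (fun m => patriciaMu p m k) n
  have h2 : Real.exp (p * z) * muF p k ((1 - p) * z) =
      ∑' n : ℕ, (∑ m ∈ Finset.range (n + 1),
        (n.choose m : ℝ) * p ^ m * (1 - p) ^ (n - m) * patriciaMu p (n - m) k) *
        (z ^ n / (n.factorial : ℝ)) := by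
    rw [exp_eq_tsum', muF, tsum_mul_tsum_eq_tsum_sum_antidiagonal_of_summable_norm
      (summable_norm_expF (p * z)) (summable_norm_muF hp hp1 k ((1 - p) * z))]
    exact tsum_congr fun n => cauchy_coeff p (1 - p) z (fun m => patriciaMu p m k) n
  have s1 : Summable fun n : ℕ => (∑ m ∈ Finset.range (n + 1),
      (n.choose m : ℝ) * (1 - p) ^ m * p ^ (n - m) * patriciaMu p (n - m) k) *
      (z ^ n / (n.factorial : ℝ)) := by
    refine ((summable_norm_sum_mul_antidiagonal_of_summable_norm
      (summable_norm_expF ((1 - p) * z)) (summable_norm_muF hp hp1 k (p * z))).of_norm).congr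
      fun n => cauchy_coeff (1 - p) p z (fun m => patriciaMu p m k) n
  have s2 : Summable fun n : ℕ => (∑ m ∈ Finset.range (n + 1),
      (n.choose m : ℝ) * p ^ m * (1 - p) ^ (n - m) * patriciaMu p (n - m) k) *
      (z ^ n / (n.factorial : ℝ)) := by
    refine ((summable_norm_sum_mul_antidiagonal_of_summable_norm
      (summable_norm_expF (p * z)) (summable_norm_muF hp hp1 k ((1 - p) * z))).of_norm).congr
      fun n => cauchy_coeff p (1 - p) z (fun m => patriciaMu p m k) n
  have s3 : Summable fun n : ℕ =>
      (patriciaMu p n (k + 1) - patriciaMu p n k) * ((1 - p) * z) ^ n / (n.factorial : ℝ) := by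
    refine ((summable_muF hp hp1 (k + 1) ((1 - p) * z)).sub
      (summable_muF hp hp1 k ((1 - p) * z))).congr fun n => by ring
  have s4 : Summable fun n : ℕ =>
      (patriciaMu p n (k + 1) - patriciaMu p n k) * (p * z) ^ n / (n.factorial : ℝ) := by
    refine ((summable_muF hp hp1 (k + 1) (p * z)).sub
      (summable_muF hp hp1 k (p * z))).congr fun n => by ring
  rw [h1, h2, muF_sub p hp hp1 k ((1 - p) * z), muF_sub p hp hp1 k (p * z),
    ← Summable.tsum_add s1 s2, ← Summable.tsum_add (s1.add s2) s3, ← Summable.tsum_add ((s1.add s2).add s3) s4]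
  refine tsum_congr fun n => ?_
  rw [mul_pow, mul_pow]
  linear_combination (z ^ n / (n.factorial : ℝ)) * patriciaMu_key hp hp1 k n


/-- The Poisson transform `G̃_k(z) = ∑_{m ≥ 0} μ_{m,k} z^m e^{-z} / m!` of the
average PATRICIA profile. -/
noncomputable def poissonG (p : ℝ) (k : ℕ) (z : ℝ) : ℝ :=
  ∑' m : ℕ, patriciaMu p m k * z ^ m * Real.exp (-z) / (m.factorial : ℝ)


lemma poissonG_eq (p : ℝ) (k : ℕ) (z : ℝ) :
    poissonG p k z = muF p k z * Real.exp (-z) := by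
  rw [poissonG, muF, ← tsum_mul_right]
  exact tsum_congr fun m => by ring


/-- The Poisson transform of the average PATRICIA profile satisfies, for `k ≥ 1`
and all real `z`, the functional equation
`G̃_k(z) = G̃_{k-1}(pz) + G̃_{k-1}(qz) + e^{-pz}(G̃_k - G̃_{k-1})(qz)
  + e^{-qz}(G̃_k - G̃_{k-1})(pz)`. -/
theorem poissonG_functional_equation (p : ℝ) (hp : 0 < p) (hp1 : p < 1)
    (q : ℝ) (hq : q = 1 - p) (k : ℕ) (hk : 1 ≤ k) (z : ℝ) :
    poissonG p k z =
      poissonG p (k - 1) (p * z) + poissonG p (k - 1) (q * z) +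
        Real.exp (-(p * z)) * (poissonG p k (q * z) - poissonG p (k - 1) (q * z)) +
        Real.exp (-(q * z)) * (poissonG p k (p * z) - poissonG p (k - 1) (p * z)) := by
  obtain ⟨k', rfl⟩ : ∃ k', k = k' + 1 := ⟨k - 1, by omega⟩
  have hk1 : k' + 1 - 1 = k' := rfl
  subst hq
  rw [hk1]
  have hE := muF_functional p hp hp1 k' z
  have hpz : Real.exp (-(p * z)) = Real.exp ((1 - p) * z) * Real.exp (-z) := by
    rw [← Real.exp_add]; ring_nf
  have hqz : Real.exp (-((1 - p) * z)) = Real.exp (p * z) * Real.exp (-z) := by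
    rw [← Real.exp_add]; ring_nf
  have hone : Real.exp ((1 - p) * z) * Real.exp (p * z) * Real.exp (-z) = 1 := by
    rw [← Real.exp_add, ← Real.exp_add, show (1 - p) * z + p * z + -z = 0 by ring,
      Real.exp_zero]
  simp only [poissonG_eq]
  rw [hpz, hqz]
  linear_combination Real.exp (-z) * hE - Real.exp (-z) *
    (muF p (k' + 1) ((1 - p) * z) - muF p k' ((1 - p) * z) +
      muF p (k' + 1) (p * z) - muF p k' (p * z)) * hone
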